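/- In the same fork SCM, the observational conditional expectation satisfies E[Z | Y = y] = (4/(4+σ²))·y, which is a strictly increasing linear function of y; hence E[Z | Y=y] ≠ E[Z | do(Y=y)] for all y ≠ 0, quantifying the gap between correlation and causation. -/

import Mathlib

open MeasureTheory ProbabilityTheory Real
open scoped NNReal ENNReal

namespace ForkAux


lemma integral_odd_eq_zero {f : ℝ → ℝ} (hodd : ∀ x, f (-x) = - f x) :
    ∫ x, f x = 0 := by
  have h := integral_neg_eq_self f (volume : Measure ℝ)
  simp only [hodd, integral_neg] at h
  linarith

lemma integral_mul_exp_neg_mul_sq_zero {b : ℝ} (hb : 0 < b) :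
    ∫ x : ℝ, x * Real.exp (-b * x ^ 2) = 0 := by
  apply integral_odd_eq_zero
  intro x
  rw [neg_sq]
  ring

noncomputable def gpdf (μ : ℝ) (v : ℝ≥0) : ℝ → ℝ≥0 := fun x => (gaussianPDFReal μ v x).toNNReal

lemma gpdf_meas (μ : ℝ) (v : ℝ≥0) : Measurable (gpdf μ v) :=
  (measurable_gaussianPDFReal μ v).real_toNNReal

lemma gpdf_coe (μ : ℝ) (v : ℝ≥0) (x : ℝ) : (gpdf μ v x : ℝ) = gaussianPDFReal μ v x :=
  Real.coe_toNNReal _ (gaussianPDFReal_nonneg μ v x)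

lemma gaussianReal_eq_withDensity (μ : ℝ) {v : ℝ≥0} (hv : v ≠ 0) :
    gaussianReal μ v = volume.withDensity (fun x => (gpdf μ v x : ℝ≥0∞)) := by
  rw [gaussianReal_of_var_ne_zero μ hv]
  congr 1

lemma integral_gaussianReal_eq (μ : ℝ) {v : ℝ≥0} (hv : v ≠ 0) (g : ℝ → ℝ) :
    ∫ x, g x ∂(gaussianReal μ v) = ∫ x, gaussianPDFReal μ v x * g x := by
  rw [gaussianReal_eq_withDensity μ hv,
    integral_withDensity_eq_integral_smul (gpdf_meas μ v)]
  congr 1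
  funext x
  rw [NNReal.smul_def, gpdf_coe, smul_eq_mul]

lemma integrable_gaussianReal_iff (μ : ℝ) {v : ℝ≥0} (hv : v ≠ 0) (g : ℝ → ℝ) :
    Integrable g (gaussianReal μ v) ↔
      Integrable (fun x => gaussianPDFReal μ v x * g x) volume := by
  rw [gaussianReal_eq_withDensity μ hv,
    integrable_withDensity_iff_integrable_smul (gpdf_meas μ v)]
  have heq : (fun x => gpdf μ v x • g x) = fun x => gaussianPDFReal μ v x * g x := by
    funext x
    rw [NNReal.smul_def, gpdf_coe, smul_eq_mul]
  rw [heq]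

lemma integrable_id_gaussian {v : ℝ≥0} (hv : v ≠ 0) :
    Integrable id (gaussianReal 0 v) := by
  have hvr : (0:ℝ) < (v:ℝ) := by positivity
  rw [integrable_gaussianReal_iff 0 hv]
  have heq : (fun x : ℝ => gaussianPDFReal 0 v x * id x)
      = fun x => (Real.sqrt (2 * π * v))⁻¹ * (x * Real.exp (-(2 * (v:ℝ))⁻¹ * x ^ 2)) := by
    funext x
    rw [gaussianPDFReal_def]
    simp only [id]
    rw [show -(x - 0) ^ 2 / (2 * (v:ℝ)) = -(2 * (v:ℝ))⁻¹ * x ^ 2 by rw [sub_zero]; ring]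
    ring
  rw [heq]
  exact (integrable_mul_exp_neg_mul_sq (by positivity)).const_mul _

lemma integral_id_gaussian {v : ℝ≥0} (hv : v ≠ 0) :
    ∫ x, x ∂(gaussianReal 0 v) = 0 := by
  have hvr : (0:ℝ) < (v:ℝ) := by positivity
  rw [integral_gaussianReal_eq 0 hv]
  have heq : (fun x : ℝ => gaussianPDFReal 0 v x * x)
      = fun x => (Real.sqrt (2 * π * v))⁻¹ * (x * Real.exp (-(2 * (v:ℝ))⁻¹ * x ^ 2)) := by
    funext x
    rw [gaussianPDFReal_def]
    dsimp only
    rw [show -(x - 0) ^ 2 / (2 * (v:ℝ)) = -(2 * (v:ℝ))⁻¹ * x ^ 2 by rw [sub_zero]; ring]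
    ring
  rw [heq, integral_const_mul, integral_mul_exp_neg_mul_sq_zero (by positivity), mul_zero]


lemma key_integral_zero {v : ℝ≥0} (hv : v ≠ 0) {t : Set ℝ} (ht : MeasurableSet t) :
    ∫ p : ℝ × ℝ, Set.indicator t (fun _ => (1:ℝ)) (2 * p.1 + p.2) *
        ((2 - 2 * (4 / (4 + (v:ℝ)))) * p.1 - (4 / (4 + (v:ℝ))) * p.2)
      ∂((gaussianReal 0 1).prod (gaussianReal 0 v)) = 0 := by
  have hvr : (0:ℝ) < (v:ℝ) := by positivity
  set vr : ℝ := (v:ℝ) with hvrdef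
  set V : ℝ := 4 + vr with hVdef
  have hV : (0:ℝ) < V := by rw [hVdef]; positivity
  set ind : ℝ → ℝ := Set.indicator t (fun _ => (1:ℝ)) with hinddef
  set g : ℝ × ℝ → ℝ :=
    fun p => ind (2 * p.1 + p.2) * ((2 - 2 * (4 / V)) * p.1 - (4 / V) * p.2) with hgdef
  have hindmeas : Measurable ind := measurable_const.indicator ht
  have hind_le : ∀ s : ℝ, ‖ind s‖ ≤ 1 := by
    intro s
    by_cases h : s ∈ t <;>
      simp [hinddef, Set.indicator_of_mem, Set.indicator_of_notMem, h]
  have hgmeas : Measurable g := by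
    rw [hgdef]
    exact (hindmeas.comp ((measurable_fst.const_mul 2).add measurable_snd)).mul
      (((measurable_fst.const_mul _)).sub ((measurable_snd.const_mul _)))
  -- integrability over the product of Gaussians
  have habs1 : Integrable (fun x : ℝ => |x|) (gaussianReal 0 1) :=
    (integrable_id_gaussian one_ne_zero).abs
  have habsv : Integrable (fun y : ℝ => |y|) (gaussianReal 0 v) :=
    (integrable_id_gaussian hv).abs
  have hsecmeas : ∀ x : ℝ, Measurable (fun y => g (x, y)) := by
    intro x
    rw [hgdef]
    dsimp only
    exact (hindmeas.comp (measurable_id.const_add (2*x))).mul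
      (measurable_const.sub (measurable_id.const_mul _))
  have hgbound : ∀ x y : ℝ, ‖g (x, y)‖ ≤ |(2 - 2 * (4 / V)) * x| + |4 / V| * |y| := by
    intro x y
    rw [hgdef]
    dsimp only
    rw [norm_mul]
    calc ‖ind (2*x + y)‖ * ‖(2 - 2 * (4 / V)) * x - 4 / V * y‖
        ≤ 1 * ‖(2 - 2 * (4 / V)) * x - 4 / V * y‖ := by
          exact mul_le_mul_of_nonneg_right (hind_le _) (norm_nonneg _)
      _ = |(2 - 2 * (4 / V)) * x - 4 / V * y| := by rw [one_mul, Real.norm_eq_abs]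
      _ ≤ |(2 - 2 * (4 / V)) * x| + |4 / V * y| := abs_sub _ _
      _ = |(2 - 2 * (4 / V)) * x| + |4 / V| * |y| := by rw [abs_mul (4/V) y]
  have hsec : ∀ x : ℝ, Integrable (fun y => g (x, y)) (gaussianReal 0 v) := by
    intro x
    refine Integrable.mono'
      ((integrable_const (|(2 - 2 * (4 / V)) * x|)).add (habsv.const_mul (|4 / V|)))
      (hsecmeas x).aestronglyMeasurable ?_
    exact Filter.Eventually.of_forall fun y => hgbound x y
  set K : ℝ := ∫ y, |y| ∂(gaussianReal 0 v) with hKdef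
  have hnormint : Integrable (fun x => ∫ y, ‖g (x, y)‖ ∂(gaussianReal 0 v))
      (gaussianReal 0 1) := by
    refine Integrable.mono'
      ((habs1.const_mul (|2 - 2 * (4 / V)|)).add (integrable_const (|4 / V| * K)))
      (hgmeas.norm.aestronglyMeasurable.integral_prod_right') ?_
    refine Filter.Eventually.of_forall fun x => ?_
    rw [Real.norm_eq_abs, abs_of_nonneg (integral_nonneg fun y => norm_nonneg _)]
    calc ∫ y, ‖g (x, y)‖ ∂(gaussianReal 0 v)
        ≤ ∫ y, (|(2 - 2 * (4 / V)) * x| + |4 / V| * |y|) ∂(gaussianReal 0 v) := by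
          refine integral_mono (hsec x).norm
            ((integrable_const _).add (habsv.const_mul _)) fun y => hgbound x y
      _ = |(2 - 2 * (4 / V)) * x| + |4 / V| * K := by
          rw [integral_add (integrable_const _) (habsv.const_mul _), integral_const,
            probReal_univ, one_smul, integral_const_mul, hKdef]
      _ ≤ |2 - 2 * (4 / V)| * |x| + |4 / V| * K := by rw [abs_mul]
  have hgInt : Integrable g ((gaussianReal 0 1).prod (gaussianReal 0 v)) :=
    (integrable_prod_iff hgmeas.aestronglyMeasurable).mpr
      ⟨Filter.Eventually.of_forall hsec, hnormint⟩
  rw [show (∫ p : ℝ × ℝ, Set.indicator t (fun _ => (1:ℝ)) (2 * p.1 + p.2) *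
        ((2 - 2 * (4 / V)) * p.1 - (4 / V) * p.2)
      ∂((gaussianReal 0 1).prod (gaussianReal 0 v))) = ∫ p, g p
      ∂((gaussianReal 0 1).prod (gaussianReal 0 v)) from rfl]
  rw [MeasureTheory.integral_prod _ hgInt]
  -- inner integral: substitute s = 2x + y and pass to Lebesgue densities
  have hinner : ∀ x : ℝ, ∫ y, g (x, y) ∂(gaussianReal 0 v)
      = ∫ s, gaussianPDFReal (2*x) v s * (ind s * (2*x - (4/V) * s)) := by
    intro x
    have hFmeas : Measurable (fun s : ℝ => ind s * (2*x - (4/V) * s)) :=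
      hindmeas.mul (measurable_const.sub (measurable_id.const_mul _))
    calc ∫ y, g (x, y) ∂(gaussianReal 0 v)
        = ∫ y, (fun s => ind s * (2*x - (4/V) * s)) (2*x + y) ∂(gaussianReal 0 v) := by
          refine integral_congr_ae (Filter.Eventually.of_forall fun y => ?_)
          rw [hgdef]
          dsimp only
          ring
      _ = ∫ s, ind s * (2*x - (4/V) * s) ∂((gaussianReal 0 v).map (fun y => 2*x + y)) := by
          have hphi : Measurable fun y : ℝ => 2*x + y := by fun_prop
          rw [integral_map hphi.aemeasurable hFmeas.aestronglyMeasurable]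
      _ = ∫ s, ind s * (2*x - (4/V) * s) ∂(gaussianReal (2*x) v) := by
          rw [show (gaussianReal 0 v).map (fun y => 2*x + y) = gaussianReal (2*x) v by
            have := gaussianReal_map_const_add (μ := 0) (v := v) (2*x)
            rwa [zero_add] at this]
      _ = ∫ s, gaussianPDFReal (2*x) v s * (ind s * (2*x - (4/V) * s)) :=
          integral_gaussianReal_eq _ hv _
  -- now a fully Lebesgue double integral; factorize the integrand
  set β : ℝ := V / (2 * vr) with hβdef
  have hβ : 0 < β := by rw [hβdef]; positivity
  set DD : ℝ := 2 * ((Real.sqrt (2 * π * ((1:ℝ≥0):ℝ)))⁻¹ * (Real.sqrt (2 * π * vr))⁻¹)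
    with hDDdef
  set G : ℝ → ℝ := fun u => DD * (u * Real.exp (-β * u ^ 2)) with hGdef
  set H : ℝ → ℝ := fun s => ind s * Real.exp (-s ^ 2 / (2 * V)) with hHdef
  have hGmeas : Measurable G := by
    rw [hGdef]
    exact (measurable_id.mul (Real.measurable_exp.comp
      ((measurable_id.pow_const 2).const_mul (-β)))).const_mul DD
  have hHmeas : Measurable H := by
    rw [hHdef]
    exact hindmeas.mul (Real.measurable_exp.comp
      (((measurable_id.pow_const 2).neg).div_const (2*V)))
  have hGint : Integrable G := (integrable_mul_exp_neg_mul_sq hβ).const_mul DD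
  have hHint : Integrable H := by
    refine Integrable.mono' (integrable_exp_neg_mul_sq (b := (2*V)⁻¹) (by positivity))
      hHmeas.aestronglyMeasurable ?_
    refine Filter.Eventually.of_forall fun s => ?_
    rw [show -(2*V)⁻¹ * s ^ 2 = -s ^ 2 / (2 * V) by ring]
    rw [hHdef]
    dsimp only
    rw [norm_mul]
    calc ‖ind s‖ * ‖Real.exp (-s ^ 2 / (2 * V))‖
        ≤ 1 * ‖Real.exp (-s ^ 2 / (2 * V))‖ :=
          mul_le_mul_of_nonneg_right (hind_le s) (norm_nonneg _)
      _ = Real.exp (-s ^ 2 / (2 * V)) := by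
          rw [one_mul, Real.norm_eq_abs, abs_of_pos (Real.exp_pos _)]
  -- pointwise factorization identity
  have hfact : ∀ x s : ℝ,
      gaussianPDFReal 0 1 x * (gaussianPDFReal (2*x) v s * (ind s * (2*x - (4/V) * s)))
      = G (x - (2/V) * s) * H s := by
    intro x s
    rw [gaussianPDFReal_def, gaussianPDFReal_def]
    dsimp only
    rw [hGdef, hHdef]
    dsimp only
    have hexp : Real.exp (-(x - 0) ^ 2 / (2 * ((1:ℝ≥0):ℝ))) *
        Real.exp (-(s - 2*x) ^ 2 / (2 * vr))
        = Real.exp (-β * (x - (2/V) * s) ^ 2) * Real.exp (-s ^ 2 / (2 * V)) := by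
      rw [← Real.exp_add, ← Real.exp_add]
      congr 1
      rw [hβdef, hVdef]
      push_cast
      field_simp
      ring
    -- treat exp terms as atoms
    calc (Real.sqrt (2 * π * ((1:ℝ≥0):ℝ)))⁻¹ * Real.exp (-(x - 0) ^ 2 / (2 * ((1:ℝ≥0):ℝ))) *
          ((Real.sqrt (2 * π * vr))⁻¹ * Real.exp (-(s - 2*x) ^ 2 / (2 * vr)) *
            (ind s * (2*x - (4/V) * s)))
        = ((Real.sqrt (2 * π * ((1:ℝ≥0):ℝ)))⁻¹ * (Real.sqrt (2 * π * vr))⁻¹ *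
            (ind s * (2*x - (4/V) * s))) *
          (Real.exp (-(x - 0) ^ 2 / (2 * ((1:ℝ≥0):ℝ))) *
            Real.exp (-(s - 2*x) ^ 2 / (2 * vr))) := by ring
      _ = ((Real.sqrt (2 * π * ((1:ℝ≥0):ℝ)))⁻¹ * (Real.sqrt (2 * π * vr))⁻¹ *
            (ind s * (2*x - (4/V) * s))) *
          (Real.exp (-β * (x - (2/V) * s) ^ 2) * Real.exp (-s ^ 2 / (2 * V))) := by
            rw [hexp]
      _ = DD * (x - (2/V) * s) * Real.exp (-β * (x - (2/V) * s) ^ 2) *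
            (ind s * Real.exp (-s ^ 2 / (2 * V))) := by
            rw [hDDdef]
            field_simp
            ring
      _ = DD * ((x - (2/V) * s) * Real.exp (-β * (x - (2/V) * s) ^ 2)) *
            (ind s * Real.exp (-s ^ 2 / (2 * V))) := by ring
  -- uncurry integrability for Fubini swap
  have huncmeas : AEStronglyMeasurable (Function.uncurry fun x s => G (x - (2/V) * s) * H s)
      ((volume : Measure ℝ).prod volume) := by
    refine Measurable.aestronglyMeasurable ?_
    exact ((hGmeas.comp (measurable_fst.sub (measurable_snd.const_mul _)))).mul
      (hHmeas.comp measurable_snd)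
  have hswapint : Integrable (Function.uncurry fun x s => G (x - (2/V) * s) * H s)
      ((volume : Measure ℝ).prod volume) := by
    refine (integrable_prod_iff' huncmeas).mpr ⟨?_, ?_⟩
    · refine Filter.Eventually.of_forall fun s => ?_
      exact (hGint.comp_sub_right ((2/V) * s)).mul_const (H s)
    · have heq : (fun s => ∫ x, ‖Function.uncurry (fun x s => G (x - (2/V) * s) * H s) (x, s)‖)
          = fun s => (∫ x, ‖G x‖) * ‖H s‖ := by
        funext s
        simp only [Function.uncurry_apply_pair, norm_mul]
        rw [integral_mul_const,
          integral_sub_right_eq_self (fun x => ‖G x‖) ((2/V) * s)]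
      simp only [Function.uncurry_apply_pair] at heq ⊢
      rw [heq]
      exact hHint.norm.const_mul _
  have hGzero : ∫ u, G u = 0 := by
    rw [hGdef, integral_const_mul, integral_mul_exp_neg_mul_sq_zero hβ, mul_zero]
  calc ∫ x, ∫ y, g (x, y) ∂(gaussianReal 0 v) ∂(gaussianReal 0 1)
      = ∫ x, (∫ s, gaussianPDFReal (2*x) v s * (ind s * (2*x - (4/V) * s)))
          ∂(gaussianReal 0 1) :=
        integral_congr_ae (Filter.Eventually.of_forall hinner)
    _ = ∫ x, gaussianPDFReal 0 1 x *
          ∫ s, gaussianPDFReal (2*x) v s * (ind s * (2*x - (4/V) * s)) :=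
        integral_gaussianReal_eq _ one_ne_zero _
    _ = ∫ x, ∫ s, G (x - (2/V) * s) * H s := by
        refine integral_congr_ae (Filter.Eventually.of_forall fun x => ?_)
        dsimp only
        rw [← integral_const_mul]
        refine integral_congr_ae (Filter.Eventually.of_forall fun s => ?_)
        exact hfact x s
    _ = ∫ s, ∫ x, G (x - (2/V) * s) * H s := integral_integral_swap hswapint
    _ = ∫ s, (∫ u, G u) * H s := by
        refine integral_congr_ae (Filter.Eventually.of_forall fun s => ?_)
        dsimp only
        rw [integral_mul_const, integral_sub_right_eq_self G ((2/V) * s)]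
    _ = 0 := by rw [hGzero]; simp


end ForkAux

open ForkAux


/-- In the fork SCM, the observational conditional expectation satisfies
`E[Z | Y] = (4/(4+σ²))·Y` almost surely; the map `y ↦ (4/(4+σ²))·y` is strictly
increasing and linear; hence for every `y ≠ 0` the observational value
`(4/(4+σ²))·y` differs from the interventional value `E[Z | do(Y=y)] = 0`,
quantifying the gap between correlation and causation. -/
theorem fork_condExp_vs_do {Ω : Type*} [MeasureSpace Ω]
    [IsProbabilityMeasure (ℙ : Measure Ω)]
    (σ : ℝ≥0) (hσ : 0 < σ)
    (X εY εZ Y Z : Ω → ℝ) (hXm : Measurable X) (hεYm : Measurable εY) (hεZm : Measurable εZ)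
    (hXlaw : Measure.map X ℙ = gaussianReal 0 1)
    (hεYlaw : Measure.map εY ℙ = gaussianReal 0 (σ ^ 2))
    (hεZlaw : Measure.map εZ ℙ = gaussianReal 0 (σ ^ 2))
    (hindep : iIndepFun ![X, εY, εZ] ℙ)
    (hY : Y = fun ω => 2 * X ω + εY ω) (hZ : Z = fun ω => 2 * X ω + εZ ω) :
    (ℙ[Z | MeasurableSpace.comap Y inferInstance]
        =ᵐ[ℙ] fun ω => (4 / (4 + (σ : ℝ) ^ 2)) * Y ω) ∧
    StrictMono (fun y : ℝ => (4 / (4 + (σ : ℝ) ^ 2)) * y) ∧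
    (∀ y : ℝ, y ≠ 0 → (4 / (4 + (σ : ℝ) ^ 2)) * y ≠ 0) := by
  have hVpos : (0:ℝ) < 4 + (σ:ℝ)^2 := by positivity
  have hcpos : (0:ℝ) < 4 / (4 + (σ:ℝ)^2) := by positivity
  refine ⟨?_, fun a b hab => (mul_lt_mul_iff_right₀ hcpos).mpr hab,
    fun y hy => mul_ne_zero hcpos.ne' hy⟩
  have hv : (σ^2 : ℝ≥0) ≠ 0 := pow_ne_zero 2 hσ.ne'
  have hvco : ((σ^2 : ℝ≥0) : ℝ) = (σ:ℝ)^2 := by push_cast; ring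
  -- integrability of the random variables
  have hXint : Integrable X ℙ := by
    have h := (integrable_map_measure aestronglyMeasurable_id hXm.aemeasurable).mp
      (by rw [hXlaw]; exact integrable_id_gaussian one_ne_zero)
    simpa [Function.comp] using h
  have hεYint : Integrable εY ℙ := by
    have h := (integrable_map_measure aestronglyMeasurable_id hεYm.aemeasurable).mp
      (by rw [hεYlaw]; exact integrable_id_gaussian hv)
    simpa [Function.comp] using h
  have hεZint : Integrable εZ ℙ := by
    have h := (integrable_map_measure aestronglyMeasurable_id hεZm.aemeasurable).mp
      (by rw [hεZlaw]; exact integrable_id_gaussian hv)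
    simpa [Function.comp] using h
  have hεZmean : ∫ ω, εZ ω ∂ℙ = 0 := by
    have h := integral_map (φ := εZ) (μ := ℙ) hεZm.aemeasurable
      (f := fun x : ℝ => x) aestronglyMeasurable_id
    rw [hεZlaw] at h
    rw [← h]
    exact integral_id_gaussian hv
  subst hY hZ
  have hYmeas : Measurable fun ω => 2 * X ω + εY ω := (hXm.const_mul 2).add hεYm
  have hYint : Integrable (fun ω => 2 * X ω + εY ω) ℙ := (hXint.const_mul 2).add hεYint
  have hZint : Integrable (fun ω => 2 * X ω + εZ ω) ℙ := (hXint.const_mul 2).add hεZint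
  set c : ℝ := 4 / (4 + (σ:ℝ)^2) with hcdef
  have hmle : MeasurableSpace.comap (fun ω => 2 * X ω + εY ω) inferInstance ≤
      (inferInstance : MeasurableSpace Ω) := hYmeas.comap_le
  have hmeas3 : ∀ i, Measurable (![X, εY, εZ] i) := by
    intro i
    fin_cases i <;> simpa using ‹_›
  -- conditional expectation characterization
  refine (ae_eq_condExp_of_forall_setIntegral_eq hmle hZint
    (fun s _ _ => (hYint.const_mul c).integrableOn) ?_ ?_).symm
  · -- set integral equality
    intro s hs _
    obtain ⟨t, ht, rfl⟩ := hs
    set ind : ℝ → ℝ := Set.indicator t (fun _ => (1:ℝ)) with hinddef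
    have hindmeas : Measurable ind := measurable_const.indicator ht
    have hind_le : ∀ r : ℝ, ‖ind r‖ ≤ 1 := by
      intro r
      by_cases h : r ∈ t <;>
        simp [hinddef, Set.indicator_of_mem, Set.indicator_of_notMem, h]
    have hindYmeas : Measurable fun ω => ind (2 * X ω + εY ω) := hindmeas.comp hYmeas
    -- part B : the εZ part vanishes by independence
    have hindepB : IndepFun (fun ω => ind (2 * X ω + εY ω)) εZ ℙ := by
      have h3 := hindep.indepFun_prodMk hmeas3 0 1 2 (by decide) (by decide)
      simp only [Matrix.cons_val_zero, Matrix.cons_val_one, Matrix.head_cons,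
        Matrix.cons_val_two, Matrix.tail_cons] at h3
      have h4 := h3.comp (φ := fun p : ℝ × ℝ => ind (2 * p.1 + p.2)) (ψ := id)
        (hindmeas.comp ((measurable_fst.const_mul 2).add measurable_snd)) measurable_id
      exact h4
    have hindYint : Integrable (fun ω => ind (2 * X ω + εY ω)) ℙ := by
      refine Integrable.mono' (integrable_const 1) hindYmeas.aestronglyMeasurable ?_
      exact Filter.Eventually.of_forall fun ω => hind_le _
    have hpartB : ∫ ω, ind (2 * X ω + εY ω) * εZ ω ∂ℙ = 0 := by
      have h := hindepB.integral_mul_eq_mul_integral hindYint.aestronglyMeasurable hεZint.aestronglyMeasurable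
      rw [show ((fun ω => ind (2 * X ω + εY ω)) * εZ)
        = fun ω => ind (2 * X ω + εY ω) * εZ ω from rfl] at h
      rw [h, hεZmean, mul_zero]
    -- part A : the (X, εY) part vanishes by the key computation
    have hXεY : IndepFun X εY ℙ := by
      have h := hindep.indepFun (i := 0) (j := 1) (by decide)
      simpa using h
    have hpairlaw : Measure.map (fun ω => (X ω, εY ω)) ℙ
        = (gaussianReal 0 1).prod (gaussianReal 0 (σ^2)) := by
      rw [((indepFun_iff_map_prod_eq_prod_map_map hXm.aemeasurable
        hεYm.aemeasurable).mp hXεY), hXlaw, hεYlaw]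
    have hgm : Measurable (fun p : ℝ × ℝ => ind (2 * p.1 + p.2) *
        ((2 - 2 * c) * p.1 - c * p.2)) :=
      (hindmeas.comp ((measurable_fst.const_mul 2).add measurable_snd)).mul
        ((measurable_fst.const_mul _).sub (measurable_snd.const_mul _))
    have hpartA : ∫ ω, ind (2 * X ω + εY ω) * ((2 - 2*c) * X ω - c * εY ω) ∂ℙ = 0 := by
      have hmapint := integral_map (μ := ℙ) (hXm.prodMk hεYm).aemeasurable
        (f := fun p : ℝ × ℝ => ind (2 * p.1 + p.2) * ((2 - 2*c) * p.1 - c * p.2))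
        hgm.aestronglyMeasurable
      rw [hpairlaw] at hmapint
      have hkey := key_integral_zero (v := σ^2) hv ht
      rw [hvco] at hkey
      rw [← hinddef, ← hcdef] at hkey
      calc ∫ ω, ind (2 * X ω + εY ω) * ((2 - 2*c) * X ω - c * εY ω) ∂ℙ
          = ∫ p : ℝ × ℝ, ind (2 * p.1 + p.2) * ((2 - 2*c) * p.1 - c * p.2)
            ∂((gaussianReal 0 1).prod (gaussianReal 0 (σ^2))) := hmapint.symm
        _ = 0 := hkey
    -- combine the two parts
    have hintA : Integrable (fun ω => ind (2*X ω + εY ω) * ((2 - 2*c)*X ω - c*εY ω)) ℙ :=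
      Integrable.bdd_mul ((hXint.const_mul _).sub (hεYint.const_mul _))
        hindYmeas.aestronglyMeasurable (Filter.Eventually.of_forall fun ω => hind_le _)
    have hintB : Integrable (fun ω => ind (2*X ω + εY ω) * εZ ω) ℙ :=
      Integrable.bdd_mul hεZint hindYmeas.aestronglyMeasurable (Filter.Eventually.of_forall fun ω => hind_le _)
    have hkey0 : ∫ ω, ind (2*X ω + εY ω) * ((2*X ω + εZ ω) - c*(2*X ω + εY ω)) ∂ℙ = 0 := by
      have hsplit : (fun ω => ind (2*X ω + εY ω) * ((2*X ω + εZ ω) - c*(2*X ω + εY ω)))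
          = fun ω => ind (2*X ω + εY ω) * ((2 - 2*c)*X ω - c*εY ω)
            + ind (2*X ω + εY ω) * εZ ω := by
        funext ω; ring
      rw [hsplit, integral_add hintA hintB, hpartA, hpartB, add_zero]
    have h0 : ∫ ω in (fun ω => 2*X ω + εY ω) ⁻¹' t,
        ((2*X ω + εZ ω) - c*(2*X ω + εY ω)) ∂ℙ = 0 := by
      rw [← integral_indicator (hYmeas ht)]
      have hindrep : (fun ω => ((fun ω => 2*X ω + εY ω) ⁻¹' t).indicator
          (fun ω => (2*X ω + εZ ω) - c*(2*X ω + εY ω)) ω)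
          = fun ω => ind (2*X ω + εY ω) * ((2*X ω + εZ ω) - c*(2*X ω + εY ω)) := by
        funext ω
        by_cases h : (2*X ω + εY ω) ∈ t
        · rw [Set.indicator_of_mem (by exact h), hinddef, Set.indicator_of_mem h, one_mul]
        · rw [Set.indicator_of_notMem (by exact h), hinddef,
            Set.indicator_of_notMem h, zero_mul]
      rw [hindrep]
      exact hkey0
    have hsub := integral_sub
      (hZint.integrableOn (s := (fun ω => 2*X ω + εY ω) ⁻¹' t) (μ := ℙ))
      ((hYint.const_mul c).integrableOn (s := (fun ω => 2*X ω + εY ω) ⁻¹' t) (μ := ℙ))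
    rw [hsub] at h0
    linarith [h0]
  · -- m-measurability
    have hYm' : Measurable[MeasurableSpace.comap (fun ω => 2 * X ω + εY ω) inferInstance]
        (fun ω => 2 * X ω + εY ω) := measurable_iff_comap_le.mpr le_rfl
    exact (Measurable.stronglyMeasurable (hYm'.const_mul c)).aestronglyMeasurable
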